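/- Under the hypotheses of the previous lemma, assume additionally that E_{l+1} > E_l for some 1 ≤ l < k. Then ∑_{i=l+1}^k ∑_{j=l+1}^k |⟨f_i, ψ_j⟩|² ≥ (k − l) − (η − 1)(∑_{i=1}^k E_i)/(E_{k+1} − E_k) − (η − 1)(∑_{i=1}^l E_i)/(E_{l+1} − E_l). -/

import Mathlib

open scoped BigOperators

open Finset


/-- Abstract combinatorial core of Lemma 2 of Seiringer–Yin. -/
lemma seiringer_key (A : ℕ → ℕ → ℝ) (En : ℕ → ℝ) (η : ℝ) (k N m : ℕ)
    (hm1 : 1 ≤ m) (hmk : m ≤ k) (hmN : m ≤ N)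
    (hA0 : ∀ i j, 0 ≤ A i j)
    (hrow : ∀ i, i < k → ∑ j ∈ range N, A i j = 1)
    (hcol : ∀ j, ∑ i ∈ range k, A i j ≤ 1)
    (hEmono : ∀ i j, i ≤ j → j < N → En i ≤ En j)
    (hHb : ∀ i, i < k → ∑ j ∈ range N, En j * A i j ≤ η * En i)
    (hmN' : m < N)
    (hgap : En (m - 1) < En m) :
    (m : ℝ) - (η - 1) * (∑ i ∈ range m, En i) / (En m - En (m - 1)) ≤
      ∑ i ∈ range m, ∑ j ∈ range m, A i j := by
  set g := En m - En (m - 1) with hgdef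
  have hg : 0 < g := by simp [hgdef]; linarith
  set t : ℕ → ℝ := fun j => ∑ i ∈ range m, A i j with ht
  have ht0 : ∀ j, 0 ≤ t j := fun j => Finset.sum_nonneg fun i _ => hA0 i j
  have ht1 : ∀ j, t j ≤ 1 := by
    intro j
    refine le_trans ?_ (hcol j)
    exact Finset.sum_le_sum_of_subset_of_nonneg
      (range_subset_range.2 hmk) (fun i _ _ => hA0 i j)
  -- per-row bound
  have hper : ∀ i, i < m → En m - η * En i ≤ ∑ j ∈ range m, (En m - En j) * A i j := by
    intro i him
    have hik : i < k := lt_of_lt_of_le him hmk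
    have hsplit : ∑ j ∈ range m, (En m - En j) * A i j
        = ∑ j ∈ range N, (En m - En j) * A i j
          - ∑ j ∈ Ico m N, (En m - En j) * A i j := by
      rw [← sum_range_add_sum_Ico _ hmN]; ring
    have htail : ∑ j ∈ Ico m N, (En m - En j) * A i j ≤ 0 := by
      refine Finset.sum_nonpos fun j hj => ?_
      rw [mem_Ico] at hj
      have : En m ≤ En j := hEmono m j hj.1 hj.2
      exact mul_nonpos_of_nonpos_of_nonneg (by linarith) (hA0 i j)
    have hfull : En m - η * En i ≤ ∑ j ∈ range N, (En m - En j) * A i j := by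
      have h1 : ∑ j ∈ range N, (En m - En j) * A i j
          = En m * (∑ j ∈ range N, A i j) - ∑ j ∈ range N, En j * A i j := by
        rw [Finset.mul_sum, ← Finset.sum_sub_distrib]
        exact Finset.sum_congr rfl fun j _ => by ring
      rw [h1, hrow i hik]
      have := hHb i hik
      linarith
    linarith
  -- sum over rows
  have hsum : (m : ℝ) * En m - η * ∑ i ∈ range m, En i ≤
      ∑ j ∈ range m, (En m - En j) * t j := by
    have : ∑ i ∈ range m, (En m - η * En i) ≤
        ∑ i ∈ range m, ∑ j ∈ range m, (En m - En j) * A i j :=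
      Finset.sum_le_sum fun i hi => hper i (mem_range.1 hi)
    rw [Finset.sum_comm] at this
    have hL : ∑ i ∈ range m, (En m - η * En i)
        = (m : ℝ) * En m - η * ∑ i ∈ range m, En i := by
      simp [Finset.sum_sub_distrib, Finset.mul_sum]
    calc (m : ℝ) * En m - η * ∑ i ∈ range m, En i
        = ∑ i ∈ range m, (En m - η * En i) := hL.symm
      _ ≤ ∑ j ∈ range m, ∑ i ∈ range m, (En m - En j) * A i j := this
      _ = ∑ j ∈ range m, (En m - En j) * t j :=
          Finset.sum_congr rfl fun j _ => (Finset.mul_sum _ _ _).symm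
  have hD : ∀ j, j < m → g ≤ En m - En j := by
    intro j hjm
    have : En j ≤ En (m - 1) := hEmono j (m - 1) (by omega) (by omega)
    simp [hgdef]; linarith
  have hkey : g * ((m : ℝ) - ∑ j ∈ range m, t j) ≤ (η - 1) * ∑ j ∈ range m, En j := by
    have h1 : ∑ j ∈ range m, g * (1 - t j) ≤ ∑ j ∈ range m, (En m - En j) * (1 - t j) := by
      refine Finset.sum_le_sum fun j hj => ?_
      have h2 := ht1 j
      exact mul_le_mul_of_nonneg_right (hD j (mem_range.1 hj)) (by linarith)
    have h3 : ∑ j ∈ range m, (En m - En j) * (1 - t j)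
        = ((m : ℝ) * En m - ∑ j ∈ range m, En j) - ∑ j ∈ range m, (En m - En j) * t j := by
      simp only [mul_one_sub, Finset.sum_sub_distrib, sub_mul, Finset.sum_const,
        card_range, nsmul_eq_mul]
    have h4 : ∑ j ∈ range m, g * (1 - t j) = g * ((m : ℝ) - ∑ j ∈ range m, t j) := by
      rw [← Finset.mul_sum, Finset.sum_sub_distrib]
      simp
    calc g * ((m : ℝ) - ∑ j ∈ range m, t j) = ∑ j ∈ range m, g * (1 - t j) := h4.symm
      _ ≤ ∑ j ∈ range m, (En m - En j) * (1 - t j) := h1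
      _ = ((m : ℝ) * En m - ∑ j ∈ range m, En j) - ∑ j ∈ range m, (En m - En j) * t j := h3
      _ ≤ (η - 1) * ∑ j ∈ range m, En j := by linarith
  have hT : ∑ i ∈ range m, ∑ j ∈ range m, A i j = ∑ j ∈ range m, t j := Finset.sum_comm
  rw [hT, sub_le_iff_le_add, ← sub_le_iff_le_add', le_div_iff₀ hg]
  nlinarith [hkey]

lemma seiringer_assembly (A : ℕ → ℕ → ℝ) (En : ℕ → ℝ) (η : ℝ) (k N l : ℕ)
    (hk : 0 < k) (hkN : k < N) (hl : 1 ≤ l) (hlk : l < k)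
    (hA0 : ∀ i j, 0 ≤ A i j)
    (hrow : ∀ i, i < k → ∑ j ∈ range N, A i j = 1)
    (hcol : ∀ j, ∑ i ∈ range k, A i j ≤ 1)
    (hEmono : ∀ i j, i ≤ j → j < N → En i ≤ En j)
    (hHb : ∀ i, i < k → ∑ j ∈ range N, En j * A i j ≤ η * En i)
    (hgapk : En (k - 1) < En k)
    (hgapl : En (l - 1) < En l) :
    (k : ℝ) - l - (η - 1) * (∑ i ∈ range k, En i) / (En k - En (k - 1))
        - (η - 1) * (∑ i ∈ range l, En i) / (En l - En (l - 1)) ≤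
      ∑ i ∈ Ico l k, ∑ j ∈ Ico l k, A i j := by
  have hKk := seiringer_key A En η k N k hk le_rfl hkN.le hA0 hrow hcol hEmono hHb hkN hgapk
  have hKl := seiringer_key A En η k N l hl hlk.le (by omega) hA0 hrow hcol hEmono hHb
    (by omega) hgapl
  -- split row sums
  have hrowsplit : ∀ (F : ℕ → ℝ),
      ∑ i ∈ range k, F i = ∑ i ∈ range l, F i + ∑ i ∈ Ico l k, F i :=
    fun F => (sum_range_add_sum_Ico F hlk.le).symm
  -- P ≤ l
  have hP : ∑ i ∈ range l, ∑ j ∈ range k, A i j ≤ (l : ℝ) := by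
    calc ∑ i ∈ range l, ∑ j ∈ range k, A i j
        ≤ ∑ i ∈ range l, ∑ j ∈ range N, A i j :=
          Finset.sum_le_sum fun i _ => Finset.sum_le_sum_of_subset_of_nonneg
            (range_subset_range.2 hkN.le) (fun j _ _ => hA0 i j)
      _ = ∑ i ∈ range l, (1 : ℝ) :=
          Finset.sum_congr rfl fun i hi => hrow i (by have := mem_range.1 hi; omega)
      _ = l := by simp
  -- Q ≤ l - Sll
  have hQ : ∑ i ∈ Ico l k, ∑ j ∈ range l, A i j
      ≤ (l : ℝ) - ∑ i ∈ range l, ∑ j ∈ range l, A i j := by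
    have h1 : ∑ i ∈ range l, ∑ j ∈ range l, A i j + ∑ i ∈ Ico l k, ∑ j ∈ range l, A i j
        = ∑ i ∈ range k, ∑ j ∈ range l, A i j :=
      sum_range_add_sum_Ico _ hlk.le
    have h2 : ∑ i ∈ range k, ∑ j ∈ range l, A i j ≤ (l : ℝ) := by
      rw [Finset.sum_comm]
      calc ∑ j ∈ range l, ∑ i ∈ range k, A i j ≤ ∑ j ∈ range l, (1 : ℝ) :=
            Finset.sum_le_sum fun j _ => hcol j
        _ = l := by simp
    linarith
  -- decompose Skk
  have hdec : ∑ i ∈ range k, ∑ j ∈ range k, A i j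
      = ∑ i ∈ range l, ∑ j ∈ range k, A i j
        + ∑ i ∈ Ico l k, ∑ j ∈ range l, A i j
        + ∑ i ∈ Ico l k, ∑ j ∈ Ico l k, A i j := by
    rw [hrowsplit (fun i => ∑ j ∈ range k, A i j)]
    have : ∑ i ∈ Ico l k, ∑ j ∈ range k, A i j
        = ∑ i ∈ Ico l k, (∑ j ∈ range l, A i j + ∑ j ∈ Ico l k, A i j) :=
      Finset.sum_congr rfl fun i _ => (sum_range_add_sum_Ico _ hlk.le).symm
    rw [this, Finset.sum_add_distrib]
    ring
  linarith
/-- Corollary of Lemma 2 of Seiringer–Yin: under the same hypotheses, if in addition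
`E_{l+1} > E_l` for some `1 ≤ l < k`, then
`∑_{i,j=l+1}^k |⟨f i, ψ j⟩|² ≥ (k-l) - (η-1)(∑_{i=1}^k E_i)/(E_{k+1}-E_k)
  - (η-1)(∑_{i=1}^l E_i)/(E_{l+1}-E_l)`. -/
theorem corollary_eigenfunction_overlap {N : ℕ}
    (H : EuclideanSpace ℂ (Fin N) →ₗ[ℂ] EuclideanSpace ℂ (Fin N))
    (hsym : ∀ x y : EuclideanSpace ℂ (Fin N), (inner ℂ (H x) y : ℂ) = inner ℂ x (H y))
    (hpos : ∀ x : EuclideanSpace ℂ (Fin N), 0 ≤ (inner ℂ x (H x) : ℂ).re)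
    (μ : Fin N → ℝ) (hμmono : Monotone μ) (hμ0 : ∀ i, 0 ≤ μ i)
    (ψ : Fin N → EuclideanSpace ℂ (Fin N)) (hortho : Orthonormal ℂ ψ)
    (heig : ∀ i, H (ψ i) = (μ i : ℂ) • ψ i)
    (k : ℕ) (hk : 0 < k) (hkN : k < N)
    (f : Fin k → EuclideanSpace ℂ (Fin N)) (hf : Orthonormal ℂ f)
    (η : ℝ) (hη : 1 < η)
    (hfH : ∀ i : Fin k,
      (inner ℂ (f i) (H (f i)) : ℂ).re ≤ η * μ (Fin.castLE hkN.le i))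
    (hgapk : μ ⟨k - 1, by omega⟩ < μ ⟨k, hkN⟩)
    (l : ℕ) (hl : 1 ≤ l) (hlk : l < k)
    (hgapl : μ ⟨l - 1, by omega⟩ < μ ⟨l, by omega⟩) :
    (k : ℝ) - l
      - (η - 1) * (∑ i : Fin k, μ (Fin.castLE hkN.le i)) /
          (μ ⟨k, hkN⟩ - μ ⟨k - 1, by omega⟩)
      - (η - 1) * (∑ i ∈ Finset.univ.filter (fun i : Fin k => (i : ℕ) < l),
            μ (Fin.castLE hkN.le i)) /
          (μ ⟨l, by omega⟩ - μ ⟨l - 1, by omega⟩) ≤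
      ∑ i : Fin k, ∑ j : Fin k,
        (if l ≤ (i : ℕ) ∧ l ≤ (j : ℕ) then
          ‖(inner ℂ (f i) (ψ (Fin.castLE hkN.le j)) : ℂ)‖ ^ 2 else 0) := by
  classical
  have hN : 0 < N := lt_trans hk hkN
  haveI : Nonempty (Fin N) := ⟨⟨0, hN⟩⟩
  -- orthonormal basis from ψ
  have hcard : Fintype.card (Fin N) = Module.finrank ℂ (EuclideanSpace ℂ (Fin N)) := by
    simp [finrank_euclideanSpace]
  let B := basisOfOrthonormalOfCardEqFinrank hortho hcard
  have hBψ : ⇑B = ψ := coe_basisOfOrthonormalOfCardEqFinrank hortho hcard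
  let b : OrthonormalBasis (Fin N) ℂ (EuclideanSpace ℂ (Fin N)) :=
    B.toOrthonormalBasis (by rwa [hBψ])
  have hbψ : ⇑b = ψ := by
    rw [show ⇑b = ⇑B from Module.Basis.coe_toOrthonormalBasis _ _, hBψ]
  have hre : ∀ (z : ℂ) (c : ℝ), ((starRingEnd ℂ) z * ((c : ℂ) * z)).re = c * ‖z‖ ^ 2 := by
    intro z c
    rw [show (starRingEnd ℂ) z * ((c : ℂ) * z) = (c : ℂ) * (z * (starRingEnd ℂ) z) by ring,
      Complex.mul_conj, ← Complex.ofReal_mul, Complex.ofReal_re, Complex.normSq_eq_norm_sq]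
  -- Parseval
  have hpar : ∀ x : EuclideanSpace ℂ (Fin N),
      ∑ j : Fin N, ‖(inner ℂ (ψ j) x : ℂ)‖ ^ 2 = ‖x‖ ^ 2 := by
    intro x
    have h := b.sum_inner_mul_inner x x
    rw [hbψ] at h
    have h2 : ((∑ j : Fin N, (inner ℂ x (ψ j) : ℂ) * inner ℂ (ψ j) x)).re
        = ∑ j : Fin N, ‖(inner ℂ (ψ j) x : ℂ)‖ ^ 2 := by
      rw [Complex.re_sum]
      refine Finset.sum_congr rfl fun j _ => ?_
      rw [← inner_conj_symm x (ψ j)]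
      simpa only [Complex.ofReal_one, one_mul] using hre (inner ℂ (ψ j) x) 1
    rw [h] at h2
    rw [← h2]
    have h3 : (inner ℂ x x : ℂ) = ((‖x‖ : ℂ)) ^ 2 := inner_self_eq_norm_sq_to_K x
    rw [h3, ← Complex.ofReal_pow, Complex.ofReal_re]
  -- expansion of the quadratic form
  have hexp : ∀ x : EuclideanSpace ℂ (Fin N),
      (inner ℂ x (H x) : ℂ).re = ∑ j : Fin N, μ j * ‖(inner ℂ (ψ j) x : ℂ)‖ ^ 2 := by
    intro x
    have h := b.sum_inner_mul_inner x (H x)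
    rw [hbψ] at h
    rw [← h, Complex.re_sum]
    refine Finset.sum_congr rfl fun j _ => ?_
    have h1 : (inner ℂ (ψ j) (H x) : ℂ) = (μ j : ℂ) * inner ℂ (ψ j) x := by
      rw [← hsym (ψ j) x, heig, inner_smul_left, Complex.conj_ofReal]
    rw [h1, ← inner_conj_symm x (ψ j)]
    exact hre _ _
  have hfnorm : ∀ i : Fin k, ‖f i‖ = 1 := hf.1
  have hψnorm : ∀ j : Fin N, ‖ψ j‖ = 1 := hortho.1
  -- combinatorial data
  set A : ℕ → ℕ → ℝ := fun i j =>
    if h : i < k ∧ j < N then ‖(inner ℂ (ψ ⟨j, h.2⟩) (f ⟨i, h.1⟩) : ℂ)‖ ^ 2 else 0 with hA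
  set En : ℕ → ℝ := fun j => if h : j < N then μ ⟨j, h⟩ else 0 with hEn
  have hA0 : ∀ i j, 0 ≤ A i j := by
    intro i j
    rw [hA]
    dsimp only
    split <;> positivity
  have hAval : ∀ (i : Fin k) (j : Fin N), A ↑i ↑j = ‖(inner ℂ (ψ j) (f i) : ℂ)‖ ^ 2 := by
    intro i j
    rw [hA]
    simp [i.isLt, j.isLt]
  have hEnval : ∀ (j : Fin N), En ↑j = μ j := by
    intro j
    rw [hEn]
    simp [j.isLt]
  have hEnval' : ∀ i : Fin k, En ↑i = μ (Fin.castLE hkN.le i) :=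
    fun i => hEnval (Fin.castLE hkN.le i)
  have hrow : ∀ i, i < k → ∑ j ∈ range N, A i j = 1 := by
    intro i hi
    rw [← Fin.sum_univ_eq_sum_range (fun j => A i j) N]
    calc ∑ j : Fin N, A i ↑j = ∑ j : Fin N, ‖(inner ℂ (ψ j) (f ⟨i, hi⟩) : ℂ)‖ ^ 2 :=
          Finset.sum_congr rfl fun j _ => hAval ⟨i, hi⟩ j
      _ = ‖f ⟨i, hi⟩‖ ^ 2 := hpar _
      _ = 1 := by rw [hfnorm]; norm_num
  have hcol : ∀ j, ∑ i ∈ range k, A i j ≤ 1 := by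
    intro j
    by_cases hj : j < N
    · rw [← Fin.sum_univ_eq_sum_range (fun i => A i j) k]
      calc ∑ i : Fin k, A ↑i j
          = ∑ i : Fin k, ‖(inner ℂ (f i) (ψ ⟨j, hj⟩) : ℂ)‖ ^ 2 := by
            refine Finset.sum_congr rfl fun i _ => ?_
            rw [show A ↑i j = A ↑i ↑(⟨j, hj⟩ : Fin N) from rfl, hAval i ⟨j, hj⟩,
              norm_inner_symm]
        _ ≤ ‖ψ ⟨j, hj⟩‖ ^ 2 := hf.sum_inner_products_le _
        _ = 1 := by rw [hψnorm]; norm_num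
    · have : ∀ i ∈ range k, A i j = 0 := by
        intro i _
        rw [hA]
        simp [hj]
      rw [Finset.sum_congr rfl this]
      simp
  have hEmono : ∀ i j, i ≤ j → j < N → En i ≤ En j := by
    intro i j hij hj
    rw [hEn]
    simp only [dif_pos hj, dif_pos (lt_of_le_of_lt hij hj)]
    exact hμmono (by simpa using hij)
  have hHb : ∀ i, i < k → ∑ j ∈ range N, En j * A i j ≤ η * En i := by
    intro i hi
    have hconv : ∑ j ∈ range N, En j * A i j
        = ∑ j : Fin N, μ j * ‖(inner ℂ (ψ j) (f ⟨i, hi⟩) : ℂ)‖ ^ 2 := by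
      rw [← Fin.sum_univ_eq_sum_range (fun j => En j * A i j) N]
      exact Finset.sum_congr rfl fun j _ => by rw [hEnval j, hAval ⟨i, hi⟩ j]
    rw [hconv, ← hexp]
    have h2 := hfH ⟨i, hi⟩
    have hEni : En i = μ (Fin.castLE hkN.le ⟨i, hi⟩) := hEnval' ⟨i, hi⟩
    rw [hEni]
    exact h2
  have hgapk' : En (k - 1) < En k := by
    rw [hEn]
    simp only [dif_pos (show k - 1 < N by omega), dif_pos hkN]
    exact hgapk
  have hgapl' : En (l - 1) < En l := by
    rw [hEn]
    simp only [dif_pos (show l - 1 < N by omega), dif_pos (show l < N by omega)]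
    exact hgapl
  have key := seiringer_assembly A En η k N l hk hkN hl hlk hA0 hrow hcol hEmono hHb
    hgapk' hgapl'
  -- convert sums in the goal
  have hsum1 : ∑ i : Fin k, μ (Fin.castLE hkN.le i) = ∑ i ∈ range k, En i := by
    rw [← Fin.sum_univ_eq_sum_range (fun i => En i) k]
    exact Finset.sum_congr rfl fun i _ => (hEnval' i).symm
  have hsum2 : ∑ i ∈ Finset.univ.filter (fun i : Fin k => (i : ℕ) < l),
      μ (Fin.castLE hkN.le i) = ∑ i ∈ range l, En i := by
    calc ∑ i ∈ Finset.univ.filter (fun i : Fin k => (i : ℕ) < l), μ (Fin.castLE hkN.le i)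
        = ∑ i : Fin k, (if (i : ℕ) < l then En ↑i else 0) := by
          rw [Finset.sum_filter]
          exact Finset.sum_congr rfl fun i _ => by rw [hEnval' i]
      _ = ∑ i ∈ range k, (if i < l then En i else 0) :=
          Fin.sum_univ_eq_sum_range (fun n => if n < l then En n else 0) k
      _ = ∑ i ∈ range l, En i := by
          rw [← Finset.sum_filter]
          congr 1
          ext x
          simp only [mem_filter, mem_range]
          omega
  have hrhs : ∑ i : Fin k, ∑ j : Fin k,
      (if l ≤ (i : ℕ) ∧ l ≤ (j : ℕ) then
        ‖(inner ℂ (f i) (ψ (Fin.castLE hkN.le j)) : ℂ)‖ ^ 2 else 0)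
      = ∑ i ∈ Ico l k, ∑ j ∈ Ico l k, A i j := by
    have hIsub : Ico l k ⊆ range k := by
      intro x hx
      simp only [mem_Ico] at hx
      exact mem_range.2 hx.2
    have step1 : ∑ i : Fin k, ∑ j : Fin k,
        (if l ≤ (i : ℕ) ∧ l ≤ (j : ℕ) then
          ‖(inner ℂ (f i) (ψ (Fin.castLE hkN.le j)) : ℂ)‖ ^ 2 else 0)
        = ∑ i ∈ range k, ∑ j ∈ range k,
          (if l ≤ i ∧ l ≤ j then A i j else 0) := by
      rw [← Fin.sum_univ_eq_sum_range
        (fun i => ∑ j ∈ range k, (if l ≤ i ∧ l ≤ j then A i j else 0)) k]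
      refine Finset.sum_congr rfl fun i _ => ?_
      rw [← Fin.sum_univ_eq_sum_range
        (fun j => (if l ≤ (i : ℕ) ∧ l ≤ j then A ↑i j else 0)) k]
      refine Finset.sum_congr rfl fun j _ => ?_
      congr 1
      have hjN : (j : ℕ) < N := lt_trans j.isLt hkN
      rw [show A ↑i ↑j = A ↑i ↑(Fin.castLE hkN.le j) from rfl,
        hAval i (Fin.castLE hkN.le j), norm_inner_symm]
    rw [step1]
    rw [← Finset.sum_subset hIsub (fun x _ hx => ?_)]
    · refine Finset.sum_congr rfl fun i hi => ?_
      rw [mem_Ico] at hi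
      rw [← Finset.sum_subset hIsub (fun x _ hx => ?_)]
      · refine Finset.sum_congr rfl fun j hj => ?_
        rw [mem_Ico] at hj
        rw [if_pos ⟨hi.1, hj.1⟩]
      · rw [mem_Ico, not_and_or, not_le] at hx
        rcases hx with hx | hx
        · rw [if_neg (by omega)]
        · exact absurd ‹x ∈ range k› (by simp; omega)
    · rw [mem_Ico, not_and_or, not_le] at hx
      rcases hx with hx | hx
      · refine Finset.sum_eq_zero fun j _ => ?_
        rw [if_neg (by omega)]
      · exact absurd ‹x ∈ range k› (by simp; omega)
  rw [hrhs, hsum1, hsum2]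
  have e1 : μ ⟨k, hkN⟩ = En k := (hEnval ⟨k, hkN⟩).symm
  have e2 : μ ⟨k - 1, by omega⟩ = En (k - 1) := (hEnval ⟨k - 1, by omega⟩).symm
  have e3 : μ ⟨l, by omega⟩ = En l := (hEnval ⟨l, by omega⟩).symm
  have e4 : μ ⟨l - 1, by omega⟩ = En (l - 1) := (hEnval ⟨l - 1, by omega⟩).symm
  rw [e1, e2, e3, e4]
  calc (k : ℝ) - l - (η - 1) * (∑ i ∈ range k, En i) / (En k - En (k - 1))
        - (η - 1) * (∑ i ∈ range l, En i) / (En l - En (l - 1))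
      ≤ ∑ i ∈ Ico l k, ∑ j ∈ Ico l k, A i j := key
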